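/- Let E_1, …, E_m be Banach spaces and let F be a Banach lattice. The set of separately L-weakly compact m-linear operators, that is, continuous m-linear operators A : E_1 × ⋯ × E_m → F such that for every k = 1,…,m and all fixed a_i ∈ E_i (i ≠ k), the bounded linear operator x_k ↦ A(a_1,…,a_{k−1},x_k,a_{k+1},…,a_m) maps the closed unit ball of E_k onto an L-weakly compact subset of F, is a closed linear subspace of L(E_1,…,E_m;F). -/

import Mathlib

open Filter Topology Bornology

/-- A norm bounded subset `A` of a Banach lattice is L-weakly compact if every disjoint
sequence in `sol(A) = {x : |x| ≤ |y| for some y ∈ A}` is norm null. -/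
def IsLWeaklyCompactSet'' {F : Type*} [NormedAddCommGroup F] [Lattice F] [IsOrderedAddMonoid F] [HasSolidNorm F] (A : Set F) : Prop :=
  IsBounded A ∧
    ∀ x : ℕ → F, (∀ n, ∃ y ∈ A, |x n| ≤ |y|) →
      (∀ i j, i ≠ j → |x i| ⊓ |x j| = 0) →
      Tendsto (fun n => ‖x n‖) atTop (nhds 0)

/-- The set of separately L-weakly compact `m`-linear operators from Banach spaces
`E₁, …, E_m` to a Banach lattice `F`: for every coordinate `i` and all fixed vectors in the
other coordinates, the associated linear operator `E i → F` maps the closed unit ball of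
`E i` onto an L-weakly compact subset of `F`. -/
def SeparatelyLWeaklyCompact {m : ℕ} (E : Fin m → Type*) (F : Type*)
    [∀ i, NormedAddCommGroup (E i)] [∀ i, NormedSpace ℝ (E i)]
    [NormedAddCommGroup F] [Lattice F] [IsOrderedAddMonoid F] [HasSolidNorm F] [NormedSpace ℝ F] : Set (ContinuousMultilinearMap ℝ E F) :=
  {A | ∀ (i : Fin m) (a : ∀ j, E j),
    IsLWeaklyCompactSet'' (⇑(A.toContinuousLinearMap a i) '' Metric.closedBall (0 : E i) 1)}

section Aux

variable {F : Type*} [NormedAddCommGroup F] [Lattice F] [IsOrderedAddMonoid F] [HasSolidNorm F]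

private lemma labs_le {a b : F} (h1 : -b ≤ a) (h2 : a ≤ b) : |a| ≤ b :=
  abs_le'.2 ⟨h2, neg_le.2 h1⟩

private lemma lneg_abs_le (x : F) : -|x| ≤ x := neg_le.2 (neg_le_abs x)

/-- Riesz decomposition with domination. -/
private lemma riesz_decomp (x a b : F) (ha : 0 ≤ a) (hb : 0 ≤ b) (h : |x| ≤ a + b) :
    ∃ u v : F, x = u + v ∧ |u| ≤ a ∧ |v| ≤ b ∧ |u| ≤ |x| ∧ |v| ≤ |x| := by
  have hx1 : x ≤ a + b := (le_abs_self x).trans h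
  have hx2 : -a - b ≤ x := by
    have h' := (neg_le_neg h).trans (lneg_abs_le x)
    rwa [neg_add, ← sub_eq_add_neg] at h'
  set u : F := (x ⊓ a) ⊔ (-a) with hu
  have habs_u_a : |u| ≤ a :=
    labs_le le_sup_right (sup_le inf_le_right ((neg_nonpos.2 ha).trans ha))
  have hsub_aux : ∀ c : F, u ≤ x + c → -c ≤ x - u := by
    intro c hc
    have h1 : u - x ≤ c := sub_le_iff_le_add'.2 hc
    have h2 := neg_le_neg h1
    rwa [neg_sub] at h2
  have hsub_aux2 : ∀ c : F, x - c ≤ u → x - u ≤ c := fun c hc => sub_le_comm.1 hc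
  refine ⟨u, x - u, by abel, habs_u_a, ?_, ?_, ?_⟩
  · refine labs_le ?_ ?_
    · refine hsub_aux b (sup_le (inf_le_left.trans (le_add_of_nonneg_right hb)) ?_)
      exact sub_le_iff_le_add.1 hx2
    · refine hsub_aux2 b (le_sup_left.trans' (le_inf (sub_le_self x hb) ?_))
      exact sub_le_iff_le_add.2 hx1
  · refine labs_le ?_ ?_
    · refine le_sup_left.trans' (le_inf (lneg_abs_le x) ?_)
      exact (neg_nonpos.2 (abs_nonneg x)).trans ha
    · refine sup_le (inf_le_left.trans (le_abs_self x)) ?_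
      exact (neg_nonpos.2 ha).trans (abs_nonneg x)
  · refine labs_le ?_ ?_
    · refine hsub_aux |x| (sup_le (inf_le_left.trans (le_add_of_nonneg_right (abs_nonneg x))) ?_)
      have h0 : (0 : F) ≤ x + |x| :=
        calc (0 : F) = -|x| + |x| := (neg_add_cancel _).symm
          _ ≤ x + |x| := add_le_add_left (lneg_abs_le x) _
      exact (neg_nonpos.2 ha).trans h0
    · refine hsub_aux2 |x| (le_sup_left.trans' (le_inf (sub_le_self x (abs_nonneg x)) ?_))
      exact (sub_nonpos.2 (le_abs_self x)).trans ha

private lemma disj_of_le {x u : ℕ → F} (hle : ∀ n, |u n| ≤ |x n|)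
    (hd : ∀ i j, i ≠ j → |x i| ⊓ |x j| = 0) : ∀ i j, i ≠ j → |u i| ⊓ |u j| = 0 := fun i j hij =>
  le_antisymm ((inf_le_inf (hle i) (hle j)).trans (hd i j hij).le)
    (le_inf (abs_nonneg _) (abs_nonneg _))

private lemma lwc_subset {S T : Set F} (hT : IsLWeaklyCompactSet'' T) (hST : S ⊆ T) :
    IsLWeaklyCompactSet'' S :=
  ⟨hT.1.subset hST, fun x hx hd => hT.2 x (fun n => (hx n).imp fun y hy => ⟨hST hy.1, hy.2⟩) hd⟩

private lemma lwc_two {S T₁ T₂ : Set F} (hbd : IsBounded S)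
    (h1 : IsLWeaklyCompactSet'' T₁) (h2 : IsLWeaklyCompactSet'' T₂)
    (h : ∀ y ∈ S, ∃ t₁ ∈ T₁, ∃ t₂ ∈ T₂, y = t₁ + t₂) : IsLWeaklyCompactSet'' S := by
  refine ⟨hbd, fun x hx hd => ?_⟩
  choose y hyS hxy using hx
  choose t₁ ht₁ t₂ ht₂ hyt using fun n => h (y n) (hyS n)
  have habs : ∀ n, |x n| ≤ |t₁ n| + |t₂ n| := fun n =>
    (hxy n).trans (by rw [hyt n]; exact abs_add_le _ _)
  choose u v huv hu1 hv1 hu2 hv2 using fun n =>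
    riesz_decomp (x n) |t₁ n| |t₂ n| (abs_nonneg _) (abs_nonneg _) (habs n)
  have hU : Tendsto (fun n => ‖u n‖) atTop (nhds 0) :=
    h1.2 u (fun n => ⟨t₁ n, ht₁ n, hu1 n⟩) (disj_of_le hu2 hd)
  have hV : Tendsto (fun n => ‖v n‖) atTop (nhds 0) :=
    h2.2 v (fun n => ⟨t₂ n, ht₂ n, hv1 n⟩) (disj_of_le hv2 hd)
  have hsum : Tendsto (fun n => ‖u n‖ + ‖v n‖) atTop (nhds 0) := by
    simpa using hU.add hV
  refine squeeze_zero (fun n => norm_nonneg _) (fun n => ?_) hsum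
  rw [huv n]; exact norm_add_le _ _

private lemma lwc_approx {S : Set F} (hbd : IsBounded S)
    (h : ∀ ε : ℝ, 0 < ε → ∃ T : Set F, IsLWeaklyCompactSet'' T ∧
      ∀ y ∈ S, ∃ t ∈ T, ‖y - t‖ ≤ ε) :
    IsLWeaklyCompactSet'' S := by
  refine ⟨hbd, fun x hx hd => ?_⟩
  rw [Metric.tendsto_atTop]
  intro ε hε
  obtain ⟨T, hT, happ⟩ := h (ε / 2) (by positivity)
  choose y hyS hxy using hx
  choose t htT hyt using fun n => happ (y n) (hyS n)
  have habs : ∀ n, |x n| ≤ |t n| + |y n - t n| := fun n => by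
    refine (hxy n).trans ?_
    have h' : y n = t n + (y n - t n) := by abel
    calc |y n| = |t n + (y n - t n)| := by rw [← h']
      _ ≤ |t n| + |y n - t n| := abs_add_le _ _
  choose u v huv hu1 hv1 hu2 hv2 using fun n =>
    riesz_decomp (x n) |t n| |y n - t n| (abs_nonneg _) (abs_nonneg _) (habs n)
  have hU : Tendsto (fun n => ‖u n‖) atTop (nhds 0) :=
    hT.2 u (fun n => ⟨t n, htT n, hu1 n⟩) (disj_of_le hu2 hd)
  obtain ⟨N, hN⟩ := Metric.tendsto_atTop.mp hU (ε / 2) (by positivity)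
  refine ⟨N, fun n hn => ?_⟩
  have h1 : ‖u n‖ < ε / 2 := by
    have := hN n hn
    rwa [Real.dist_eq, sub_zero, abs_of_nonneg (norm_nonneg _)] at this
  have h2 : ‖v n‖ ≤ ε / 2 := (norm_le_norm_of_abs_le_abs (by simpa using hv1 n)).trans (hyt n)
  rw [Real.dist_eq, sub_zero, abs_of_nonneg (norm_nonneg _)]
  calc ‖x n‖ = ‖u n + v n‖ := by rw [huv n]
    _ ≤ ‖u n‖ + ‖v n‖ := norm_add_le _ _
    _ < ε / 2 + ε / 2 := add_lt_add_of_lt_of_le h1 h2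
    _ = ε := by ring

private lemma lwc_nsmul {S : Set F} (h : IsLWeaklyCompactSet'' S) (n : ℕ) :
    IsLWeaklyCompactSet'' {z | ∃ t ∈ S, z = n • t} := by
  induction n with
  | zero =>
    constructor
    · refine isBounded_iff_forall_norm_le.2 ⟨0, ?_⟩
      rintro z ⟨t, _, rfl⟩; simp
    · intro x hx _
      have hx0 : ∀ k, ‖x k‖ ≤ 0 := by
        intro k
        obtain ⟨y, ⟨t, _, rfl⟩, hxy⟩ := hx k
        have h0 : |x k| ≤ |(0 : F)| := by simpa using hxy
        simpa using norm_le_norm_of_abs_le_abs h0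
      exact squeeze_zero (fun k => norm_nonneg _) hx0 tendsto_const_nhds
  | succ k ih =>
    have hbd : IsBounded {z | ∃ t ∈ S, z = (k + 1) • t} := by
      obtain ⟨C, hC⟩ := isBounded_iff_forall_norm_le.mp h.1
      refine isBounded_iff_forall_norm_le.2 ⟨(k + 1 : ℕ) * max C 0, ?_⟩
      rintro z ⟨t, ht, rfl⟩
      calc ‖(k + 1 : ℕ) • t‖ ≤ (k + 1 : ℕ) * ‖t‖ := norm_nsmul_le
        _ ≤ (k + 1 : ℕ) * max C 0 := by
            refine mul_le_mul_of_nonneg_left ((hC t ht).trans (le_max_left _ _)) (by positivity)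
    refine lwc_two hbd ih h ?_
    rintro z ⟨t, ht, rfl⟩
    exact ⟨k • t, ⟨t, ht, rfl⟩, t, ht, succ_nsmul t k⟩

private lemma imageBall_bounded [NormedSpace ℝ F] {E : Type*} [NormedAddCommGroup E]
    [NormedSpace ℝ E] (T : E →L[ℝ] F) : IsBounded (⇑T '' Metric.closedBall (0 : E) 1) := by
  refine isBounded_iff_forall_norm_le.2 ⟨‖T‖, ?_⟩
  rintro z ⟨e, he, rfl⟩
  calc ‖T e‖ ≤ ‖T‖ * ‖e‖ := T.le_opNorm e
    _ ≤ ‖T‖ * 1 := mul_le_mul_of_nonneg_left (mem_closedBall_zero_iff.mp he) (norm_nonneg T)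
    _ = ‖T‖ := mul_one _

end Aux

/-- For Banach spaces `E₁, …, E_m` and a Banach lattice `F`, the set of separately L-weakly
compact `m`-linear operators is a closed linear subspace of `L(E₁,…,E_m;F)`. -/
theorem stmt15 {m : ℕ} (E : Fin m → Type*) (F : Type*)
    [∀ i, NormedAddCommGroup (E i)] [∀ i, NormedSpace ℝ (E i)] [∀ i, CompleteSpace (E i)]
    [NormedAddCommGroup F] [Lattice F] [IsOrderedAddMonoid F] [HasSolidNorm F] [NormedSpace ℝ F] [CompleteSpace F] :
    IsClosed (SeparatelyLWeaklyCompact E F) ∧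
      (0 : ContinuousMultilinearMap ℝ E F) ∈ SeparatelyLWeaklyCompact E F ∧
      (∀ A₁ ∈ SeparatelyLWeaklyCompact E F, ∀ A₂ ∈ SeparatelyLWeaklyCompact E F,
        A₁ + A₂ ∈ SeparatelyLWeaklyCompact E F) ∧
      (∀ (c : ℝ), ∀ A ∈ SeparatelyLWeaklyCompact E F,
        c • A ∈ SeparatelyLWeaklyCompact E F) := by
  have key_zero : (0 : ContinuousMultilinearMap ℝ E F) ∈ SeparatelyLWeaklyCompact E F := by
    intro i a
    refine ⟨imageBall_bounded _, fun x hx _ => ?_⟩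
    have hx0 : ∀ k, ‖x k‖ ≤ 0 := by
      intro k
      obtain ⟨y, ⟨e, he, rfl⟩, hxy⟩ := hx k
      have h0 : |x k| ≤ |(0 : F)| := by
        simpa [ContinuousMultilinearMap.toContinuousLinearMap_apply] using hxy
      simpa using norm_le_norm_of_abs_le_abs h0
    exact squeeze_zero (fun k => norm_nonneg _) hx0 tendsto_const_nhds
  have key_add : ∀ A₁ ∈ SeparatelyLWeaklyCompact E F, ∀ A₂ ∈ SeparatelyLWeaklyCompact E F,
      A₁ + A₂ ∈ SeparatelyLWeaklyCompact E F := by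
    intro A₁ h1 A₂ h2 i a
    refine lwc_two (imageBall_bounded _) (h1 i a) (h2 i a) ?_
    rintro z ⟨e, he, rfl⟩
    refine ⟨A₁.toContinuousLinearMap a i e, ⟨e, he, rfl⟩,
      A₂.toContinuousLinearMap a i e, ⟨e, he, rfl⟩, ?_⟩
    simp [ContinuousMultilinearMap.toContinuousLinearMap_apply]
  have key_smul : ∀ (c : ℝ), ∀ A ∈ SeparatelyLWeaklyCompact E F,
      c • A ∈ SeparatelyLWeaklyCompact E F := by
    intro c A hA i a
    set n : ℕ := ⌈|c|⌉₊ + 1 with hn_def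
    have hn : (0 : ℝ) < n := by positivity
    have hcn : |c| ≤ (n : ℝ) := by
      refine (Nat.le_ceil _).trans ?_
      exact_mod_cast Nat.le_succ _
    refine lwc_subset (lwc_nsmul (hA i a) n) ?_
    rintro z ⟨e, he, rfl⟩
    refine ⟨A.toContinuousLinearMap a i ((n : ℝ)⁻¹ • (c • e)),
      ⟨(n : ℝ)⁻¹ • (c • e), ?_, rfl⟩, ?_⟩
    · rw [mem_closedBall_zero_iff] at he ⊢
      rw [norm_smul, norm_smul, norm_inv, Real.norm_natCast, Real.norm_eq_abs]
      calc (n : ℝ)⁻¹ * (|c| * ‖e‖) ≤ (n : ℝ)⁻¹ * ((n : ℝ) * 1) := by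
            refine mul_le_mul_of_nonneg_left ?_ (by positivity)
            exact mul_le_mul hcn he (norm_nonneg _) hn.le
        _ = 1 := by field_simp
    · calc (c • A).toContinuousLinearMap a i e = c • A (Function.update a i e) := by
            simp [ContinuousMultilinearMap.toContinuousLinearMap_apply]
        _ = A (Function.update a i (c • e)) := (A.map_update_smul a i c e).symm
        _ = A (Function.update a i ((n : ℝ) • ((n : ℝ)⁻¹ • (c • e)))) := by
            rw [smul_inv_smul₀ hn.ne']
        _ = (n : ℝ) • A (Function.update a i ((n : ℝ)⁻¹ • (c • e))) := A.map_update_smul a i _ _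
        _ = n • A.toContinuousLinearMap a i ((n : ℝ)⁻¹ • (c • e)) := by
            rw [Nat.cast_smul_eq_nsmul]
            simp [ContinuousMultilinearMap.toContinuousLinearMap_apply]
  have key_closed : IsClosed (SeparatelyLWeaklyCompact E F) := by
    refine isClosed_of_closure_subset ?_
    intro A hA i a
    refine lwc_approx (imageBall_bounded _) ?_
    intro ε hε
    set C : ℝ := ∏ j, max 1 ‖a j‖ with hC
    have hC0 : (0 : ℝ) < C :=
      Finset.prod_pos fun j _ => lt_of_lt_of_le one_pos (le_max_left _ _)
    obtain ⟨B, hB, hdist⟩ := Metric.mem_closure_iff.mp hA (ε / C) (by positivity)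
    refine ⟨_, hB i a, ?_⟩
    rintro y ⟨e, he, rfl⟩
    refine ⟨B.toContinuousLinearMap a i e, ⟨e, he, rfl⟩, ?_⟩
    have heq : A.toContinuousLinearMap a i e - B.toContinuousLinearMap a i e
        = (A - B) (Function.update a i e) := by
      simp [ContinuousMultilinearMap.toContinuousLinearMap_apply]
    rw [heq]
    have hprod : ∏ j, ‖Function.update a i e j‖ ≤ C := by
      refine Finset.prod_le_prod (fun j _ => norm_nonneg _) fun j _ => ?_
      by_cases hj : j = i
      · subst hj
        rw [Function.update_self]
        exact (mem_closedBall_zero_iff.mp he).trans (le_max_left _ _)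
      · rw [Function.update_of_ne hj]
        exact le_max_right _ _
    calc ‖(A - B) (Function.update a i e)‖
        ≤ ‖A - B‖ * ∏ j, ‖Function.update a i e j‖ := (A - B).le_opNorm _
      _ ≤ (ε / C) * C := by
          refine mul_le_mul ?_ hprod (Finset.prod_nonneg fun j _ => norm_nonneg _) (by positivity)
          rw [← dist_eq_norm]
          exact hdist.le
      _ = ε := div_mul_cancel₀ ε hC0.ne'
  exact ⟨key_closed, key_zero, key_add, key_smul⟩
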